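/- If the variable y does not occur in the first-order formula θ, then θ ↪ (∃y ψ) is logically equivalent to ∃y (θ ↪ ψ) in Team Semantics. -/
import Mathlib


/-- A relational first-order signature. -/
structure Signature where
  RelSym : Type
  arity : RelSym → ℕ

/-- First-order formulas in negation normal form over signature `σ` and variables `V`. -/
inductive Formula (σ : Signature) (V : Type) : Type
  | rel (r : σ.RelSym) (ts : Fin (σ.arity r) → V)
  | nrel (r : σ.RelSym) (ts : Fin (σ.arity r) → V)
  | eq (v w : V)
  | neq (v w : V)
  | and (φ ψ : Formula σ V)
  | or (φ ψ : Formula σ V)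
  | ex (v : V) (φ : Formula σ V)
  | all (v : V) (φ : Formula σ V)

/-- A first-order structure with domain `M`. -/
structure Struc (σ : Signature) (M : Type) where
  interp : ∀ r : σ.RelSym, (Fin (σ.arity r) → M) → Prop

/-- Free variables of a formula. -/
def Formula.freeVars {σ : Signature} {V : Type} : Formula σ V → Set V
  | .rel _ ts => Set.range ts
  | .nrel _ ts => Set.range ts
  | .eq v w => {v, w}
  | .neq v w => {v, w}
  | .and φ ψ => φ.freeVars ∪ ψ.freeVars
  | .or φ ψ => φ.freeVars ∪ ψ.freeVars
  | .ex v φ => φ.freeVars \ {v}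
  | .all v φ => φ.freeVars \ {v}

/-- All variables (free or bound) occurring in a formula. -/
def Formula.vars {σ : Signature} {V : Type} : Formula σ V → Set V
  | .rel _ ts => Set.range ts
  | .nrel _ ts => Set.range ts
  | .eq v w => {v, w}
  | .neq v w => {v, w}
  | .and φ ψ => φ.vars ∪ ψ.vars
  | .or φ ψ => φ.vars ∪ ψ.vars
  | .ex v φ => insert v φ.vars
  | .all v φ => insert v φ.vars

/-- Tarskian satisfaction of a formula by a single assignment. -/
def Tarski {σ : Signature} {V M : Type} [DecidableEq V] (𝕄 : Struc σ M) :
    Formula σ V → (V → M) → Prop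
  | .rel r ts, s => 𝕄.interp r (fun i => s (ts i))
  | .nrel r ts, s => ¬ 𝕄.interp r (fun i => s (ts i))
  | .eq v w, s => s v = s w
  | .neq v w, s => s v ≠ s w
  | .and φ ψ, s => Tarski 𝕄 φ s ∧ Tarski 𝕄 ψ s
  | .or φ ψ, s => Tarski 𝕄 φ s ∨ Tarski 𝕄 ψ s
  | .ex v φ, s => ∃ m : M, Tarski 𝕄 φ (Function.update s v m)
  | .all v φ, s => ∀ m : M, Tarski 𝕄 φ (Function.update s v m)

/-- Supplementation `X[H/v]` of a team. -/
def supplement {V M : Type} [DecidableEq V] (X : Set (V → M))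
    (H : (V → M) → Set M) (v : V) : Set (V → M) :=
  {t | ∃ s ∈ X, ∃ m ∈ H s, t = Function.update s v m}

/-- Duplication `X[M/v]` of a team. -/
def duplicate {V M : Type} [DecidableEq V] (X : Set (V → M)) (v : V) : Set (V → M) :=
  {t | ∃ s ∈ X, ∃ m : M, t = Function.update s v m}

/-- Team Semantics satisfaction. -/
def TeamSat {σ : Signature} {V M : Type} [DecidableEq V] (𝕄 : Struc σ M) :
    Formula σ V → Set (V → M) → Prop
  | .rel r ts, X => ∀ s ∈ X, 𝕄.interp r (fun i => s (ts i))
  | .nrel r ts, X => ∀ s ∈ X, ¬ 𝕄.interp r (fun i => s (ts i))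
  | .eq v w, X => ∀ s ∈ X, s v = s w
  | .neq v w, X => ∀ s ∈ X, s v ≠ s w
  | .and φ ψ, X => TeamSat 𝕄 φ X ∧ TeamSat 𝕄 ψ X
  | .or φ ψ, X => ∃ Y Z, X = Y ∪ Z ∧ TeamSat 𝕄 φ Y ∧ TeamSat 𝕄 ψ Z
  | .ex v φ, X => ∃ H : (V → M) → Set M,
      (∀ s ∈ X, (H s).Nonempty) ∧ TeamSat 𝕄 φ (supplement X H v)
  | .all v φ, X => TeamSat 𝕄 φ (duplicate X v)

/-- A (generalized) dependency: an arity together with, for each domain,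
a property of relations of that arity (the class of relations satisfying it). -/
structure Dep where
  ar : ℕ
  sem : (M : Type) → Set (Fin ar → M) → Prop

/-- Formulas of `FO(𝒟)`: first-order formulas in NNF possibly containing
dependency atoms `D t̄`. -/
inductive TForm (σ : Signature) (V : Type) : Type 1
  | rel (r : σ.RelSym) (ts : Fin (σ.arity r) → V)
  | nrel (r : σ.RelSym) (ts : Fin (σ.arity r) → V)
  | eq (v w : V)
  | neq (v w : V)
  | and (φ ψ : TForm σ V)
  | or (φ ψ : TForm σ V)
  | ex (v : V) (φ : TForm σ V)
  | all (v : V) (φ : TForm σ V)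
  | dep (d : Dep) (ts : Fin d.ar → V)

/-- All variables occurring in a `TForm`. -/
def TForm.vars {σ : Signature} {V : Type} : TForm σ V → Set V
  | .rel _ ts => Set.range ts
  | .nrel _ ts => Set.range ts
  | .eq v w => {v, w}
  | .neq v w => {v, w}
  | .and φ ψ => φ.vars ∪ ψ.vars
  | .or φ ψ => φ.vars ∪ ψ.vars
  | .ex v φ => insert v φ.vars
  | .all v φ => insert v φ.vars
  | .dep _ ts => Set.range ts

/-- Team Semantics for formulas with dependency atoms.  The dependency atom
`D t̄` holds in `X` iff the relation `X(t̄)` satisfies `D`. -/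
def TTeamSat {σ : Signature} {V M : Type} [DecidableEq V] (𝕄 : Struc σ M) :
    TForm σ V → Set (V → M) → Prop
  | .rel r ts, X => ∀ s ∈ X, 𝕄.interp r (fun i => s (ts i))
  | .nrel r ts, X => ∀ s ∈ X, ¬ 𝕄.interp r (fun i => s (ts i))
  | .eq v w, X => ∀ s ∈ X, s v = s w
  | .neq v w, X => ∀ s ∈ X, s v ≠ s w
  | .and φ ψ, X => TTeamSat 𝕄 φ X ∧ TTeamSat 𝕄 ψ X
  | .or φ ψ, X => ∃ Y Z, X = Y ∪ Z ∧ TTeamSat 𝕄 φ Y ∧ TTeamSat 𝕄 ψ Z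
  | .ex v φ, X => ∃ H : (V → M) → Set M,
      (∀ s ∈ X, (H s).Nonempty) ∧ TTeamSat 𝕄 φ (supplement X H v)
  | .all v φ, X => TTeamSat 𝕄 φ (duplicate X v)
  | .dep d ts, X => d.sem M ((fun s => fun i => s (ts i)) '' X)

/-- The NNF negation of a first-order formula. -/
def Formula.neg {σ : Signature} {V : Type} : Formula σ V → Formula σ V
  | .rel r ts => .nrel r ts
  | .nrel r ts => .rel r ts
  | .eq v w => .neq v w
  | .neq v w => .eq v w
  | .and φ ψ => .or φ.neg ψ.neg
  | .or φ ψ => .and φ.neg ψ.neg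
  | .ex v φ => .all v φ.neg
  | .all v φ => .ex v φ.neg

/-- Embedding of first-order formulas into formulas with dependency atoms. -/
def Formula.toT {σ : Signature} {V : Type} : Formula σ V → TForm σ V
  | .rel r ts => .rel r ts
  | .nrel r ts => .nrel r ts
  | .eq v w => .eq v w
  | .neq v w => .neq v w
  | .and φ ψ => .and φ.toT ψ.toT
  | .or φ ψ => .or φ.toT ψ.toT
  | .ex v φ => .ex v φ.toT
  | .all v φ => .all v φ.toT

/-- The connective `θ ↪ φ`, defined as `(¬θ) ∨ (θ ∧ φ)`. -/
def hook {σ : Signature} {V : Type} (θ : Formula σ V) (φ : TForm σ V) : TForm σ V :=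
  .or θ.neg.toT (.and θ.toT φ)

/-- The restriction `X ↾ θ` of a team to the assignments Tarski-satisfying `θ`. -/
def restrTeam {σ : Signature} {V M : Type} [DecidableEq V] (𝕄 : Struc σ M)
    (X : Set (V → M)) (θ : Formula σ V) : Set (V → M) :=
  {s ∈ X | Tarski 𝕄 θ s}

open Classical in
/-- Negation lemma. -/
theorem tarski_neg {σ : Signature} {V M : Type} [DecidableEq V] (𝕄 : Struc σ M)
    (θ : Formula σ V) (s : V → M) : Tarski 𝕄 θ.neg s ↔ ¬ Tarski 𝕄 θ s := by
  induction θ generalizing s with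
  | rel r ts => simp [Formula.neg, Tarski]
  | nrel r ts => simp [Formula.neg, Tarski]
  | eq v w => simp [Formula.neg, Tarski]
  | neq v w => simp [Formula.neg, Tarski]
  | and φ ψ ihφ ihψ =>
      simp only [Formula.neg, Tarski, ihφ, ihψ]
      tauto
  | or φ ψ ihφ ihψ => simp [Formula.neg, Tarski, ihφ, ihψ, not_or]
  | ex v φ ih => simp [Formula.neg, Tarski, ih]
  | all v φ ih => simp [Formula.neg, Tarski, ih]

/-- Flatness of FO formulas in team semantics. -/
theorem flat {σ : Signature} {V M : Type} [DecidableEq V] (𝕄 : Struc σ M)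
    (φ : Formula σ V) (X : Set (V → M)) :
    TTeamSat 𝕄 φ.toT X ↔ ∀ s ∈ X, Tarski 𝕄 φ s := by
  induction φ generalizing X with
  | rel r ts => simp [Formula.toT, TTeamSat, Tarski]
  | nrel r ts => simp [Formula.toT, TTeamSat, Tarski]
  | eq v w => simp [Formula.toT, TTeamSat, Tarski]
  | neq v w => simp [Formula.toT, TTeamSat, Tarski]
  | and φ ψ ihφ ihψ =>
      simp only [Formula.toT, TTeamSat, ihφ, ihψ, Tarski]
      exact ⟨fun ⟨h1, h2⟩ s hs => ⟨h1 s hs, h2 s hs⟩,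
        fun h => ⟨fun s hs => (h s hs).1, fun s hs => (h s hs).2⟩⟩
  | or φ ψ ihφ ihψ =>
      simp only [Formula.toT, TTeamSat, ihφ, ihψ, Tarski]
      constructor
      · rintro ⟨Y, Z, rfl, h1, h2⟩ s hs
        cases hs with
        | inl h => exact Or.inl (h1 s h)
        | inr h => exact Or.inr (h2 s h)
      · intro h
        refine ⟨{s ∈ X | Tarski 𝕄 φ s}, {s ∈ X | Tarski 𝕄 ψ s}, ?_,
          fun s hs => hs.2, fun s hs => hs.2⟩
        ext s
        constructor
        · intro hs
          rcases h s hs with h' | h'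
          · exact Or.inl ⟨hs, h'⟩
          · exact Or.inr ⟨hs, h'⟩
        · rintro (⟨hs, _⟩ | ⟨hs, _⟩) <;> exact hs
  | ex v φ ih =>
      simp only [Formula.toT, TTeamSat, ih, Tarski]
      constructor
      · rintro ⟨H, hne, hsat⟩ s hs
        obtain ⟨m, hm⟩ := hne s hs
        exact ⟨m, hsat _ ⟨s, hs, m, hm, rfl⟩⟩
      · intro h
        refine ⟨fun s => {m | Tarski 𝕄 φ (Function.update s v m)}, h, ?_⟩
        rintro t ⟨s, hs, m, hm, rfl⟩
        exact hm
  | all v φ ih =>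
      simp only [Formula.toT, TTeamSat, ih, Tarski]
      constructor
      · intro h s hs m
        exact h _ ⟨s, hs, m, rfl⟩
      · rintro h t ⟨s, hs, m, rfl⟩
        exact h s hs m

/-- Locality: updating a variable not occurring in `θ` doesn't change truth. -/
theorem tarski_update {σ : Signature} {V M : Type} [DecidableEq V] (𝕄 : Struc σ M)
    (θ : Formula σ V) (y : V) (hy : y ∉ θ.vars) (s : V → M) (m : M) :
    Tarski 𝕄 θ (Function.update s y m) ↔ Tarski 𝕄 θ s := by
  induction θ generalizing s with
  | rel r ts =>
      have : ∀ i, ts i ≠ y := fun i h => hy (h ▸ Set.mem_range_self i)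
      simp only [Tarski]
      have : (fun i => Function.update s y m (ts i)) = fun i => s (ts i) := by
        funext i; exact Function.update_of_ne (this i) _ _
      rw [this]
  | nrel r ts =>
      have : ∀ i, ts i ≠ y := fun i h => hy (h ▸ Set.mem_range_self i)
      simp only [Tarski]
      have : (fun i => Function.update s y m (ts i)) = fun i => s (ts i) := by
        funext i; exact Function.update_of_ne (this i) _ _
      rw [this]
  | eq v w =>
      have hv : v ≠ y := fun h => hy (by simp [Formula.vars, h])
      have hw : w ≠ y := fun h => hy (by simp [Formula.vars, h])
      simp [Tarski, Function.update_of_ne hv, Function.update_of_ne hw]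
  | neq v w =>
      have hv : v ≠ y := fun h => hy (by simp [Formula.vars, h])
      have hw : w ≠ y := fun h => hy (by simp [Formula.vars, h])
      simp [Tarski, Function.update_of_ne hv, Function.update_of_ne hw]
  | and φ ψ ihφ ihψ =>
      have h1 : y ∉ φ.vars := fun h => hy (Or.inl h)
      have h2 : y ∉ ψ.vars := fun h => hy (Or.inr h)
      simp [Tarski, ihφ h1, ihψ h2]
  | or φ ψ ihφ ihψ =>
      have h1 : y ∉ φ.vars := fun h => hy (Or.inl h)
      have h2 : y ∉ ψ.vars := fun h => hy (Or.inr h)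
      simp [Tarski, ihφ h1, ihψ h2]
  | ex v φ ih =>
      have hv : y ≠ v := fun h => hy (by simp [Formula.vars, h])
      have h1 : y ∉ φ.vars := fun h => hy (Set.mem_insert_iff.mpr (Or.inr h))
      simp only [Tarski]
      constructor
      · rintro ⟨m', hm'⟩
        refine ⟨m', ?_⟩
        rw [Function.update_comm hv] at hm'
        exact (ih h1 _).mp hm'
      · rintro ⟨m', hm'⟩
        refine ⟨m', ?_⟩
        rw [Function.update_comm hv]
        exact (ih h1 _).mpr hm'
  | all v φ ih =>
      have hv : y ≠ v := fun h => hy (by simp [Formula.vars, h])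
      have h1 : y ∉ φ.vars := fun h => hy (Set.mem_insert_iff.mpr (Or.inr h))
      simp only [Tarski]
      constructor
      · intro h m'
        have := h m'
        rw [Function.update_comm hv] at this
        exact (ih h1 _).mp this
      · intro h m'
        rw [Function.update_comm hv]
        exact (ih h1 _).mpr (h m')

/-- Characterization of the hook connective. -/
theorem hook_iff {σ : Signature} {V M : Type} [DecidableEq V] (𝕄 : Struc σ M)
    (θ : Formula σ V) (φ : TForm σ V) (X : Set (V → M)) :
    TTeamSat 𝕄 (hook θ φ) X ↔ TTeamSat 𝕄 φ (restrTeam 𝕄 X θ) := by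
  show (∃ Y Z, X = Y ∪ Z ∧ _ ∧ _) ↔ _
  constructor
  · rintro ⟨Y, Z, rfl, h1, h2, h3⟩
    rw [flat] at h1
    rw [flat] at h2
    have hZ : restrTeam 𝕄 (Y ∪ Z) θ = Z := by
      ext s
      constructor
      · rintro ⟨hs, hθ⟩
        cases hs with
        | inl h => exact absurd hθ ((tarski_neg 𝕄 θ s).mp (h1 s h))
        | inr h => exact h
      · intro hs
        exact ⟨Or.inr hs, h2 s hs⟩
    rwa [hZ]
  · intro h
    refine ⟨{s ∈ X | ¬ Tarski 𝕄 θ s}, restrTeam 𝕄 X θ, ?_, ?_, ?_, h⟩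
    · ext s
      constructor
      · intro hs
        by_cases hθ : Tarski 𝕄 θ s
        · exact Or.inr ⟨hs, hθ⟩
        · exact Or.inl ⟨hs, hθ⟩
      · rintro (⟨hs, _⟩ | ⟨hs, _⟩) <;> exact hs
    · rw [flat]; exact fun s hs => (tarski_neg 𝕄 θ s).mpr hs.2
    · rw [flat]; exact fun s hs => hs.2

/-- Restriction commutes with supplementation at a variable not in `θ`. -/
theorem restr_supplement {σ : Signature} {V M : Type} [DecidableEq V] (𝕄 : Struc σ M)
    (θ : Formula σ V) (y : V) (hy : y ∉ θ.vars) (X : Set (V → M))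
    (H : (V → M) → Set M) :
    restrTeam 𝕄 (supplement X H y) θ = supplement (restrTeam 𝕄 X θ) H y := by
  ext t
  constructor
  · rintro ⟨⟨s, hs, m, hm, rfl⟩, hθ⟩
    exact ⟨s, ⟨hs, (tarski_update 𝕄 θ y hy s m).mp hθ⟩, m, hm, rfl⟩
  · rintro ⟨s, ⟨hs, hθ⟩, m, hm, rfl⟩
    exact ⟨⟨s, hs, m, hm, rfl⟩, (tarski_update 𝕄 θ y hy s m).mpr hθ⟩

open Classical in
/-- if `y` does not occur in `θ` then `θ ↪ (∃y ψ) ≡ ∃y (θ ↪ ψ)`. -/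
theorem hook_ex {σ : Signature} {V M : Type} [DecidableEq V]
    (𝕄 : Struc σ M) (θ : Formula σ V) (ψ : TForm σ V) (y : V)
    (hy : y ∉ θ.vars) (X : Set (V → M)) :
    TTeamSat 𝕄 (hook θ (.ex y ψ)) X ↔ TTeamSat 𝕄 (.ex y (hook θ ψ)) X := by
  rw [hook_iff]
  show (∃ H : (V → M) → Set M, _ ∧ _) ↔ (∃ H : (V → M) → Set M, _ ∧ _)
  constructor
  · rintro ⟨H, hne, hsat⟩
    refine ⟨fun s => if Tarski 𝕄 θ s then H s else {s y}, ?_, ?_⟩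
    · intro s hs
      by_cases hθ : Tarski 𝕄 θ s
      · simpa [hθ] using hne s ⟨hs, hθ⟩
      · simp [hθ]
    · rw [hook_iff, restr_supplement 𝕄 θ y hy]
      have : supplement (restrTeam 𝕄 X θ)
          (fun s => if Tarski 𝕄 θ s then H s else {s y}) y
          = supplement (restrTeam 𝕄 X θ) H y := by
        ext t
        constructor
        · rintro ⟨s, hs, m, hm, rfl⟩
          refine ⟨s, hs, m, ?_, rfl⟩
          simpa [hs.2] using hm
        · rintro ⟨s, hs, m, hm, rfl⟩
          exact ⟨s, hs, m, by simpa [hs.2] using hm, rfl⟩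
      rwa [this]
  · rintro ⟨H, hne, hsat⟩
    rw [hook_iff, restr_supplement 𝕄 θ y hy] at hsat
    exact ⟨H, fun s hs => hne s hs.1, hsat⟩
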